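/- For N = qM (q ≥ 3), the Ramanujan subspace S_q ⊆ ℂ^N is the orthogonal direct sum of its φ(q)/2 conjugate subspaces G_{q,i} = span{g(ω_{q,i}), conj(g(ω_{q,i}))}, i = 1,…,φ(q)/2: the G_{q,i} are pairwise orthogonal and their sum is S_q. -/

import Mathlib

open Finset Complex Real

noncomputable def hinner {N : ℕ} (u v : Fin N → ℂ) : ℂ :=
  ∑ n, (starRingEnd ℂ) (u n) * v n

lemma sum_exp_zero (q M N : ℕ) (hq : 3 ≤ q) (hN : N = q * M) (d : ℤ)
    (hd : ¬ (q:ℤ) ∣ d) :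
    ∑ n : Fin N, Complex.exp (2 * π * d * n / q * Complex.I) = 0 := by
  have hq0 : (q:ℂ) ≠ 0 := by exact_mod_cast by omega
  set ζ : ℂ := Complex.exp (2 * π * d / q * Complex.I) with hζ
  have hz : ∀ n : ℕ, Complex.exp (2 * π * d * n / q * Complex.I) = ζ ^ n := by
    intro n
    rw [hζ, ← Complex.exp_nat_mul]
    ring_nf
  have hζq : ζ ^ q = 1 := by
    rw [hζ, ← Complex.exp_nat_mul]
    have : (q:ℂ) * (2 * π * d / q * Complex.I) = d * (2 * π * Complex.I) := by
      field_simp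
    rw [this, Complex.exp_int_mul_two_pi_mul_I]
  have hζ1 : ζ ≠ 1 := by
    intro h
    rw [hζ, Complex.exp_eq_one_iff] at h
    obtain ⟨m, hm⟩ := h
    apply hd
    refine ⟨m, ?_⟩
    have hπ : (π:ℂ) ≠ 0 := by exact_mod_cast Real.pi_ne_zero
    have h2 : (2 * (π:ℂ) * Complex.I) ≠ 0 := by
      simp [Real.pi_ne_zero, Complex.I_ne_zero]
    have key : (d:ℂ) * (2 * (π:ℂ) * Complex.I) = ((q:ℂ) * m) * (2 * (π:ℂ) * Complex.I) := by
      field_simp at hm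
      linear_combination (2 * (π:ℂ) * Complex.I) * hm
    have : (d:ℂ) = q * m := mul_right_cancel₀ h2 key
    exact_mod_cast this
  have : ∑ n : Fin N, Complex.exp (2 * π * d * n / q * Complex.I)
      = ∑ n ∈ Finset.range N, ζ ^ n := by
    rw [Fin.sum_univ_eq_sum_range (fun m => Complex.exp (2 * π * d * m / q * Complex.I))]
    exact Finset.sum_congr rfl fun n _ => hz n
  rw [this, geom_sum_eq hζ1]
  have hN1 : ζ ^ N = 1 := by rw [hN, pow_mul, hζq, one_pow]
  rw [hN1]
  simp

lemma hinner_exp_zero (q M N : ℕ) (hq : 3 ≤ q) (hN : N = q * M) (a b : ℤ)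
    (hd : ¬ (q:ℤ) ∣ (b - a)) :
    hinner (N := N)
      (fun n => ((1 / Real.sqrt N : ℝ) : ℂ) * Complex.exp (2 * π * (a:ℂ) * n / q * Complex.I))
      (fun n => ((1 / Real.sqrt N : ℝ) : ℂ) * Complex.exp (2 * π * (b:ℂ) * n / q * Complex.I))
      = 0 := by
  have key := sum_exp_zero q M N hq hN (b - a) hd
  push_cast at key
  unfold hinner
  have hq0 : (q:ℂ) ≠ 0 := by exact_mod_cast by omega
  have hpt : ∀ n : Fin N,
      (starRingEnd ℂ) (((1 / Real.sqrt N : ℝ) : ℂ) * Complex.exp (2 * π * (a:ℂ) * n / q * Complex.I))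
        * (((1 / Real.sqrt N : ℝ) : ℂ) * Complex.exp (2 * π * (b:ℂ) * n / q * Complex.I))
      = (((1 / Real.sqrt N : ℝ) : ℂ) * ((1 / Real.sqrt N : ℝ) : ℂ))
          * Complex.exp (2 * π * ((b:ℤ) - (a:ℤ)) * n / q * Complex.I) := by
    intro n
    rw [map_mul, ← Complex.exp_conj, Complex.conj_ofReal]
    have hconj : (starRingEnd ℂ) (2 * π * (a:ℂ) * n / q * Complex.I)
        = -(2 * π * (a:ℂ) * n / q * Complex.I) := by
      simp [map_mul, map_div₀, Complex.conj_ofReal, Complex.conj_I, map_ofNat]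
    rw [hconj]
    rw [show (((1 / Real.sqrt N : ℝ) : ℂ) * Complex.exp (-(2 * π * (a:ℂ) * n / q * Complex.I)))
          * (((1 / Real.sqrt N : ℝ) : ℂ) * Complex.exp (2 * π * (b:ℂ) * n / q * Complex.I))
        = (((1 / Real.sqrt N : ℝ) : ℂ) * ((1 / Real.sqrt N : ℝ) : ℂ))
          * (Complex.exp (-(2 * π * (a:ℂ) * n / q * Complex.I))
              * Complex.exp (2 * π * (b:ℂ) * n / q * Complex.I)) by ring]
    rw [← Complex.exp_add]
    congr 1
    ring
  calc ∑ n : Fin N, (starRingEnd ℂ) (((1 / Real.sqrt N : ℝ) : ℂ) * Complex.exp (2 * π * (a:ℂ) * n / q * Complex.I))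
        * (((1 / Real.sqrt N : ℝ) : ℂ) * Complex.exp (2 * π * (b:ℂ) * n / q * Complex.I))
      = ∑ n : Fin N, (((1 / Real.sqrt N : ℝ) : ℂ) * ((1 / Real.sqrt N : ℝ) : ℂ))
          * Complex.exp (2 * π * ((b:ℤ) - (a:ℤ)) * n / q * Complex.I) :=
        Finset.sum_congr rfl fun n _ => hpt n
    _ = (((1 / Real.sqrt N : ℝ) : ℂ) * ((1 / Real.sqrt N : ℝ) : ℂ))
          * ∑ n : Fin N, Complex.exp (2 * π * ((b:ℤ) - (a:ℤ)) * n / q * Complex.I) := by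
        rw [Finset.mul_sum]
    _ = 0 := by rw [key, mul_zero]

lemma hinner_add_left {N : ℕ} (u v w : Fin N → ℂ) :
    hinner (u + v) w = hinner u w + hinner v w := by
  unfold hinner
  rw [← Finset.sum_add_distrib]
  exact Finset.sum_congr rfl fun n _ => by simp [add_mul]

lemma hinner_smul_left {N : ℕ} (c : ℂ) (u w : Fin N → ℂ) :
    hinner (c • u) w = (starRingEnd ℂ) c * hinner u w := by
  unfold hinner
  rw [Finset.mul_sum]
  exact Finset.sum_congr rfl fun n _ => by simp [mul_assoc]

lemma hinner_zero_left {N : ℕ} (w : Fin N → ℂ) : hinner 0 w = 0 := by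
  unfold hinner; simp

lemma hinner_add_right {N : ℕ} (u v w : Fin N → ℂ) :
    hinner u (v + w) = hinner u v + hinner u w := by
  unfold hinner
  rw [← Finset.sum_add_distrib]
  exact Finset.sum_congr rfl fun n _ => by simp [mul_add]

lemma hinner_smul_right {N : ℕ} (c : ℂ) (u w : Fin N → ℂ) :
    hinner u (c • w) = c * hinner u w := by
  unfold hinner
  rw [Finset.mul_sum]
  exact Finset.sum_congr rfl fun n _ => by simp; ring

lemma hinner_zero_right {N : ℕ} (w : Fin N → ℂ) : hinner w 0 = 0 := by
  unfold hinner; simp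

lemma hinner_span_zero {N : ℕ} (s t : Set (Fin N → ℂ))
    (h : ∀ x ∈ s, ∀ y ∈ t, hinner x y = 0) :
    ∀ u ∈ Submodule.span ℂ s, ∀ v ∈ Submodule.span ℂ t, hinner u v = 0 := by
  intro u hu
  induction hu using Submodule.span_induction with
  | mem x hx =>
      intro v hv
      induction hv using Submodule.span_induction with
      | mem y hy => exact h x hx y hy
      | zero => exact hinner_zero_right x
      | add y z hy hz ihy ihz => rw [hinner_add_right, ihy, ihz, add_zero]
      | smul c y hy ihy => rw [hinner_smul_right, ihy, mul_zero]
  | zero => intro v hv; exact hinner_zero_left v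
  | add x y hx hy ihx ihy =>
      intro v hv
      rw [hinner_add_left, ihx v hv, ihy v hv, add_zero]
  | smul c x hx ihx =>
      intro v hv
      rw [hinner_smul_left, ihx v hv, mul_zero]

lemma not_dvd_helper (q : ℕ) (d : ℤ) (h0 : d ≠ 0) (hlt : d < q) (hgt : -(q:ℤ) < d) :
    ¬ (q:ℤ) ∣ d := by
  intro hdvd
  have h2 : (q:ℤ) ≤ |d| := Int.le_of_dvd (abs_pos.mpr h0) ((dvd_abs _ _).mpr hdvd)
  rcases abs_cases d with ⟨h, _⟩ | ⟨h, _⟩ <;> omega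

set_option maxHeartbeats 1000000 in
theorem stmt_12 (q M : ℕ) (hq : 3 ≤ q) (hM : 0 < M) (N : ℕ) (hN : N = q * M) :
    let g : ℕ → (Fin N → ℂ) := fun k => fun n =>
      (1 / Real.sqrt N : ℝ) * Complex.exp (2 * π * k * (n : ℕ) / q * Complex.I)
    let S := (Finset.range q).filter (fun k => 1 ≤ k ∧ 2 * k < q ∧ Nat.gcd k q = 1)
    let G : ℕ → Submodule ℂ (Fin N → ℂ) := fun k =>
      Submodule.span ℂ ({g k, fun n => (starRingEnd ℂ) (g k n)} : Set (Fin N → ℂ))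
    S.card = Nat.totient q / 2 ∧
    (∀ k₁ ∈ S, ∀ k₂ ∈ S, k₁ ≠ k₂ →
      ∀ u ∈ G k₁, ∀ v ∈ G k₂, hinner u v = 0) ∧
    (⨆ k ∈ S, G k) =
      Submodule.span ℂ
        {w : Fin N → ℂ | ∃ k, 1 ≤ k ∧ k < q ∧ Nat.gcd k q = 1 ∧ w = g k} := by
  intro g S G
  have hq0 : (q:ℂ) ≠ 0 := by exact_mod_cast by omega
  have hmemS : ∀ k, k ∈ S ↔ (k < q ∧ 1 ≤ k ∧ 2 * k < q ∧ Nat.gcd k q = 1) := by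
    intro k
    show k ∈ (Finset.range q).filter _ ↔ _
    rw [Finset.mem_filter, Finset.mem_range]
  -- the conjugate of g k, as g with an integer frequency
  have hgz : ∀ k : ℕ, g k = fun n : Fin N =>
      ((1 / Real.sqrt N : ℝ) : ℂ) * Complex.exp (2 * π * (((k:ℤ)):ℂ) * n / q * Complex.I) := by
    intro k; funext n
    show ((1 / Real.sqrt N : ℝ) : ℂ) * Complex.exp (2 * π * (k:ℂ) * n / q * Complex.I) = _
    norm_num
  have hcgz : ∀ k : ℕ, (fun n => (starRingEnd ℂ) (g k n)) = fun n : Fin N =>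
      ((1 / Real.sqrt N : ℝ) : ℂ) * Complex.exp (2 * π * (Int.cast (-(k:ℤ)) : ℂ) * n / q * Complex.I) := by
    intro k; funext n
    show (starRingEnd ℂ) (((1 / Real.sqrt N : ℝ) : ℂ) * Complex.exp (2 * π * (k:ℂ) * n / q * Complex.I)) = _
    rw [map_mul, ← Complex.exp_conj, Complex.conj_ofReal]
    congr 1
    simp [map_mul, map_div₀, Complex.conj_ofReal, Complex.conj_I, map_ofNat]
    push_cast
    ring
  have hcg : ∀ k, k ≤ q → (fun n => (starRingEnd ℂ) (g k n)) = g (q - k) := by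
    intro k hk
    rw [hcgz k, hgz (q - k)]
    funext n
    congr 1
    have hcast : (((q - k : ℕ) : ℤ) : ℂ) = (q : ℂ) - (k : ℂ) := by push_cast [hk]; ring
    rw [hcast]
    have harg : 2 * π * ((q:ℂ) - (k:ℂ)) * n / q * Complex.I
        = (n : ℂ) * (2 * π * Complex.I) + 2 * π * (Int.cast (-(k:ℤ)) : ℂ) * n / q * Complex.I := by
      push_cast
      field_simp
      ring
    rw [harg, Complex.exp_add, Complex.exp_nat_mul_two_pi_mul_I, one_mul]
  refine ⟨?_, ?_, ?_⟩
  · -- cardinality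
    classical
    set T : Finset ℕ := (Finset.range q).filter (fun k => 1 ≤ k ∧ q < 2 * k ∧ Nat.gcd k q = 1) with hT
    have hgcdsub : ∀ k, k ≤ q → Nat.gcd (q - k) q = Nat.gcd k q := fun k hk =>
      Nat.gcd_self_sub_left hk
    have hST : S.card = T.card := by
      apply Finset.card_bij' (fun k _ => q - k) (fun k _ => q - k)
      · intro k hk
        rw [hmemS] at hk
        rw [hT, Finset.mem_filter, Finset.mem_range, hgcdsub k (by omega)]
        omega
      · intro k hk
        rw [hT, Finset.mem_filter, Finset.mem_range] at hk
        rw [hmemS, hgcdsub k (by omega)]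
        omega
      · intro k hk; rw [hmemS] at hk; omega
      · intro k hk; rw [hT, Finset.mem_filter, Finset.mem_range] at hk; omega
    have hA : Nat.totient q = ((Finset.range q).filter (fun k => Nat.gcd k q = 1)).card := by
      rw [Nat.totient_eq_card_coprime]
      congr 1
      apply Finset.filter_congr
      intro k _
      simp [Nat.Coprime, Nat.gcd_comm]
    have hunion : (Finset.range q).filter (fun k => Nat.gcd k q = 1) = S ∪ T := by
      ext k
      simp only [hT, Finset.mem_union, hmemS k, Finset.mem_filter, Finset.mem_range]
      constructor
      · rintro ⟨hk, hgcd⟩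
        have hk1 : 1 ≤ k := by
          rcases Nat.eq_zero_or_pos k with rfl | h
          · rw [Nat.gcd_zero_left] at hgcd; omega
          · exact h
        have hne : 2 * k ≠ q := by
          intro h
          have hdv : k ∣ Nat.gcd k q := Nat.dvd_gcd dvd_rfl ⟨2, by omega⟩
          rw [hgcd] at hdv
          have := Nat.le_of_dvd one_pos hdv
          omega
        rcases lt_or_gt_of_ne hne with h | h
        · exact Or.inl ⟨hk, hk1, h, hgcd⟩
        · exact Or.inr ⟨hk, hk1, h, hgcd⟩
      · rintro (⟨hk, _, _, h⟩ | ⟨hk, _, _, h⟩) <;> exact ⟨hk, h⟩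
    have hdisj : Disjoint S T := by
      rw [Finset.disjoint_left]
      intro k hk hk'
      rw [hmemS] at hk
      rw [hT, Finset.mem_filter] at hk'
      omega
    have : Nat.totient q = S.card + T.card := by
      rw [hA, hunion, Finset.card_union_of_disjoint hdisj]
    omega
  · -- orthogonality
    intro k₁ hk₁ k₂ hk₂ hne
    rw [hmemS] at hk₁ hk₂
    apply hinner_span_zero
    intro x hx y hy
    rcases hx with rfl | hx
    · rcases hy with rfl | hy
      · rw [hgz k₁, hgz k₂]
        exact hinner_exp_zero q M N hq hN (k₁:ℤ) (k₂:ℤ)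
          (by apply not_dvd_helper <;> omega)
      · rw [Set.mem_singleton_iff] at hy
        subst hy
        rw [hgz k₁, hcgz k₂]
        exact hinner_exp_zero q M N hq hN (k₁:ℤ) (-(k₂:ℤ))
          (by apply not_dvd_helper <;> omega)
    · rw [Set.mem_singleton_iff] at hx
      subst hx
      rcases hy with rfl | hy
      · rw [hcgz k₁, hgz k₂]
        exact hinner_exp_zero q M N hq hN (-(k₁:ℤ)) (k₂:ℤ)
          (by apply not_dvd_helper <;> omega)
      · rw [Set.mem_singleton_iff] at hy
        subst hy
        rw [hcgz k₁, hcgz k₂]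
        exact hinner_exp_zero q M N hq hN (-(k₁:ℤ)) (-(k₂:ℤ))
          (by apply not_dvd_helper <;> omega)
  · -- span equality
    apply le_antisymm
    · apply iSup₂_le
      intro k hk
      rw [hmemS] at hk
      apply Submodule.span_le.mpr
      intro x hx
      apply Submodule.subset_span
      rcases hx with rfl | hx
      · exact ⟨k, hk.2.1, by omega, hk.2.2.2, rfl⟩
      · rw [Set.mem_singleton_iff] at hx
        subst hx
        refine ⟨q - k, by omega, by omega, ?_, hcg k (by omega)⟩
        rw [Nat.gcd_self_sub_left (by omega : k ≤ q)]
        exact hk.2.2.2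
    · apply Submodule.span_le.mpr
      rintro w ⟨k, hk1, hkq, hgcd, rfl⟩
      have hne : 2 * k ≠ q := by
        intro h
        have hdv : k ∣ Nat.gcd k q := Nat.dvd_gcd dvd_rfl ⟨2, by omega⟩
        rw [hgcd] at hdv
        have := Nat.le_of_dvd one_pos hdv
        omega
      rcases lt_or_gt_of_ne hne with h | h
      · have hkS : k ∈ S := (hmemS k).mpr ⟨hkq, hk1, h, hgcd⟩
        have hle : G k ≤ ⨆ k ∈ S, G k := le_iSup₂ (f := fun k _ => G k) k hkS
        exact hle (Submodule.subset_span (Set.mem_insert _ _))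
      · have hk'S : q - k ∈ S := by
          rw [hmemS, Nat.gcd_self_sub_left (by omega : k ≤ q)]
          omega
        have hle : G (q - k) ≤ ⨆ k ∈ S, G k := le_iSup₂ (f := fun k _ => G k) (q - k) hk'S
        have hgk : g k = (fun n => (starRingEnd ℂ) (g (q - k) n)) := by
          rw [hcg (q - k) (by omega), Nat.sub_sub_self (by omega : k ≤ q)]
        rw [hgk]
        exact hle (Submodule.subset_span (Set.mem_insert_iff.mpr (Or.inr rfl)))
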